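/- Let W be the Witt vectors of a perfect field of characteristic p and g ∈ W[[t]] with g ≡ 1 mod (p, t)·W[[t]] — more precisely g(0) ≡ 1 mod p. Then log(g) := −∑_{n≥1} (1−g)ⁿ/n converges in the ring A_t of divided-power-bounded series, satisfies d(log g) = dg/g, and log(g)(0) ≡ 0 mod p. -/

import Mathlib

/-!
STATEMENT 4. Here `W = W(𝔽_p) = ℤ_[p]`, `K = ℚ_[p]`.  `MemAt p f` says `f` lies in the
ring `A_t` of divided-power-bounded series (as in Statement 0).  Let `g ∈ W⟦t⟧`
(`‖coeff n g‖ ≤ 1`) with `g(0) ≡ 1 mod p`.  Then `log g := −∑_{n≥1} (1−g)ⁿ/n` converges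
coefficientwise in `K`, the resulting series `L` lies in `A_t`, satisfies
`d(log g) = dg/g` (i.e. `g · L' = g'`) and has constant term `≡ 0 mod p`.
-/

open PowerSeries Filter Nat

def MemAt (p : ℕ) [Fact p.Prime] (f : PowerSeries ℚ_[p]) : Prop :=
  (∀ n : ℕ, ‖(n ! : ℚ_[p]) * PowerSeries.coeff (R := ℚ_[p]) n f‖ ≤ 1) ∧
  ∀ r : ℝ, 0 < r → r < 1 →
    Tendsto (fun n : ℕ => ‖PowerSeries.coeff (R := ℚ_[p]) n f‖ * r ^ n) atTop (nhds 0)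

section Aux

variable (p : ℕ) [Fact p.Prime]

lemma aux_nat_norm_le_one (j : ℕ) : ‖(j : ℚ_[p])‖ ≤ 1 := by
  have := Padic.norm_int_le_one (p := p) (j : ℤ)
  push_cast at this
  exact this

lemma aux_norm_inv_nat (n : ℕ) (hn : n ≠ 0) : ‖((n : ℚ_[p]))⁻¹‖ ≤ (n : ℝ) := by
  have hp : p.Prime := Fact.out
  set v := n.factorization p with hv
  set m := n / p ^ v with hm
  have hnm : p ^ v * m = n := Nat.ordProj_mul_ordCompl_eq_self n p
  have hmd : ¬ (p : ℤ) ∣ (m : ℤ) := by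
    exact_mod_cast Nat.not_dvd_ordCompl hp hn
  have hm1 : ‖(m : ℚ_[p])‖ = 1 := by
    rcases lt_or_eq_of_le (Padic.norm_int_le_one (p := p) (m : ℤ)) with hlt | heq
    · exact absurd ((Padic.norm_intCast_lt_one_iff (k := (m : ℤ))).1 (by exact_mod_cast hlt)) hmd
    · exact_mod_cast heq
  have hcast : (n : ℚ_[p]) = (p : ℚ_[p]) ^ v * (m : ℚ_[p]) := by
    rw [← hnm]; push_cast; ring
  have hnorm : ‖(n : ℚ_[p])‖ = ((p : ℝ) ^ v)⁻¹ := by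
    rw [hcast, norm_mul, norm_pow, Padic.norm_p, hm1, mul_one, inv_pow]
  rw [norm_inv, hnorm, inv_inv]
  exact_mod_cast Nat.le_of_dvd (Nat.pos_of_ne_zero hn) (Nat.ordProj_dvd n p)

lemma aux_keypow (a b : ℕ) : ((p:ℝ)⁻¹) ^ (a - b) ≤ (p:ℝ) ^ b * ((p:ℝ)⁻¹) ^ a := by
  have hp : p.Prime := Fact.out
  have hp0 : (0:ℝ) < p := by exact_mod_cast hp.pos
  have hr0 : (0:ℝ) ≤ (p:ℝ)⁻¹ := by positivity
  have hr1 : (p:ℝ)⁻¹ ≤ 1 := by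
    rw [inv_le_one_iff₀]; right; exact_mod_cast hp.one_le
  have hpb : (p:ℝ) ^ b * ((p:ℝ)⁻¹) ^ b = 1 := by
    rw [← mul_pow, mul_inv_cancel₀ (ne_of_gt hp0), one_pow]
  have hab : a ≤ b + (a - b) := by omega
  calc ((p:ℝ)⁻¹) ^ (a - b) = (p:ℝ)^b * (((p:ℝ)⁻¹)^b * ((p:ℝ)⁻¹)^(a-b)) := by
        rw [← mul_assoc, hpb, one_mul]
    _ = (p:ℝ)^b * ((p:ℝ)⁻¹)^(b + (a-b)) := by rw [pow_add]
    _ ≤ (p:ℝ)^b * ((p:ℝ)⁻¹)^a := by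
        exact mul_le_mul_of_nonneg_left (pow_le_pow_of_le_one hr0 hr1 hab)
          (le_of_lt (by positivity))

lemma aux_coeff_mul_int (F G : PowerSeries ℚ_[p])
    (hF : ∀ n, ‖PowerSeries.coeff (R := ℚ_[p]) n F‖ ≤ 1)
    (hG : ∀ n, ‖PowerSeries.coeff (R := ℚ_[p]) n G‖ ≤ 1) (k : ℕ) :
    ‖PowerSeries.coeff (R := ℚ_[p]) k (F * G)‖ ≤ 1 := by
  rw [PowerSeries.coeff_mul]
  refine IsUltrametricDist.norm_sum_le_of_forall_le_of_nonneg zero_le_one fun x _ => ?_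
  rw [norm_mul]
  exact mul_le_one₀ (hF _) (norm_nonneg _) (hG _)

lemma aux_pow_int (F : PowerSeries ℚ_[p])
    (hF : ∀ n, ‖PowerSeries.coeff (R := ℚ_[p]) n F‖ ≤ 1) :
    ∀ m n, ‖PowerSeries.coeff (R := ℚ_[p]) n (F ^ m)‖ ≤ 1 := by
  intro m
  induction m with
  | zero =>
    intro n
    rw [pow_zero, PowerSeries.coeff_one]
    split <;> simp
  | succ m ih =>
    intro n
    rw [pow_succ]
    exact aux_coeff_mul_int p _ _ ih hF n

lemma aux_pow_bound (h : PowerSeries ℚ_[p])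
    (h1 : ∀ n, ‖PowerSeries.coeff (R := ℚ_[p]) n h‖ ≤ 1)
    (h0 : ‖PowerSeries.coeff (R := ℚ_[p]) 0 h‖ ≤ (p:ℝ)⁻¹) :
    ∀ m k, ‖PowerSeries.coeff (R := ℚ_[p]) k (h ^ m)‖ ≤ ((p:ℝ)⁻¹) ^ (m - k) := by
  have hp : p.Prime := Fact.out
  have hr0 : (0:ℝ) ≤ (p:ℝ)⁻¹ := by positivity
  have hr1 : (p:ℝ)⁻¹ ≤ 1 := by
    rw [inv_le_one_iff₀]; right; exact_mod_cast hp.one_le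
  intro m
  induction m with
  | zero =>
    intro k
    rw [Nat.zero_sub, pow_zero, pow_zero, PowerSeries.coeff_one]
    split <;> simp
  | succ m ih =>
    intro k
    rw [pow_succ, PowerSeries.coeff_mul]
    refine IsUltrametricDist.norm_sum_le_of_forall_le_of_nonneg (by positivity) fun x hx => ?_
    rw [Finset.HasAntidiagonal.mem_antidiagonal] at hx
    rw [norm_mul]
    rcases Nat.eq_zero_or_pos x.2 with h2 | h2
    · have hx1 : x.1 = k := by omega
      calc ‖PowerSeries.coeff (R := ℚ_[p]) x.1 (h^m)‖ * ‖PowerSeries.coeff (R := ℚ_[p]) x.2 h‖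
          ≤ ((p:ℝ)⁻¹) ^ (m - k) * (p:ℝ)⁻¹ := by
            refine mul_le_mul ?_ ?_ (norm_nonneg _) (by positivity)
            · rw [hx1]; exact ih k
            · rw [h2]; exact h0
        _ = ((p:ℝ)⁻¹) ^ (m - k + 1) := (pow_succ _ _).symm
        _ ≤ ((p:ℝ)⁻¹) ^ (m + 1 - k) := pow_le_pow_of_le_one hr0 hr1 (by omega)
    · calc ‖PowerSeries.coeff (R := ℚ_[p]) x.1 (h^m)‖ * ‖PowerSeries.coeff (R := ℚ_[p]) x.2 h‖
          ≤ ((p:ℝ)⁻¹) ^ (m - x.1) * 1 := by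
            exact mul_le_mul (ih x.1) (h1 x.2) (norm_nonneg _) (by positivity)
        _ = ((p:ℝ)⁻¹) ^ (m - x.1) := mul_one _
        _ ≤ ((p:ℝ)⁻¹) ^ (m + 1 - k) := pow_le_pow_of_le_one hr0 hr1 (by omega)

lemma aux_geo_summable (r : ℝ) (hr0 : 0 ≤ r) (hr1 : r < 1) :
    Summable (fun m : ℕ => ((m:ℝ) + 1) * r ^ m) := by
  have h1 : Summable (fun m : ℕ => ((m:ℝ)) * r ^ m) := by
    have := summable_pow_mul_geometric_of_norm_lt_one (R := ℝ) 1
      (r := r) (by rwa [Real.norm_eq_abs, abs_of_nonneg hr0])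
    simpa using this
  have h2 : Summable (fun m : ℕ => r ^ m) := summable_geometric_of_lt_one hr0 hr1
  simpa [add_mul] using h1.add h2

lemma aux_coeff_dF (f : PowerSeries ℚ_[p]) (n : ℕ) :
    PowerSeries.coeff n (PowerSeries.derivativeFun f) = PowerSeries.coeff (n + 1) f * (n + 1) :=
  PowerSeries.coeff_derivative f n

lemma aux_dpow (h : PowerSeries ℚ_[p]) :
    ∀ m : ℕ, PowerSeries.derivativeFun (h ^ (m+1)) =
      (PowerSeries.C (R := ℚ_[p]) ((m : ℚ_[p]) + 1)) * (h ^ m * PowerSeries.derivativeFun h) := by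
  intro m
  induction m with
  | zero => simp [pow_one, pow_zero, one_mul]
  | succ m ih =>
    have hC : (PowerSeries.C (R := ℚ_[p])) (((m+1 : ℕ) : ℚ_[p]) + 1)
        = (PowerSeries.C (R := ℚ_[p])) ((m : ℚ_[p]) + 1) + 1 := by
      push_cast
      rw [map_add, map_one]
    rw [pow_succ, PowerSeries.derivativeFun_mul, ih, smul_eq_mul, smul_eq_mul, hC]
    ring

end Aux

theorem stmt4 (p : ℕ) [Fact p.Prime] (g : PowerSeries ℚ_[p])
    (hg : ∀ n : ℕ, ‖PowerSeries.coeff (R := ℚ_[p]) n g‖ ≤ 1)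
    (hg0 : ‖PowerSeries.coeff (R := ℚ_[p]) 0 g - 1‖ ≤ (p : ℝ)⁻¹) :
    ∃ L : PowerSeries ℚ_[p],
      (∀ k : ℕ, HasSum
        (fun n : ℕ => -(PowerSeries.coeff (R := ℚ_[p]) k ((1 - g) ^ (n + 1)) / (n + 1)))
        (PowerSeries.coeff (R := ℚ_[p]) k L)) ∧
      MemAt p L ∧
      g * PowerSeries.derivativeFun L = PowerSeries.derivativeFun g ∧
      ‖PowerSeries.coeff (R := ℚ_[p]) 0 L‖ ≤ (p : ℝ)⁻¹ := by
  have hp : p.Prime := Fact.out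
  have hp0 : (0:ℝ) < p := by exact_mod_cast hp.pos
  have hp1 : (1:ℝ) ≤ p := by exact_mod_cast hp.one_le
  have hr0 : (0:ℝ) ≤ (p:ℝ)⁻¹ := by positivity
  have hr0' : (0:ℝ) < (p:ℝ)⁻¹ := by positivity
  have hr1 : (p:ℝ)⁻¹ < 1 := by
    rw [inv_lt_one_iff₀]; right; exact_mod_cast hp.one_lt
  set h : PowerSeries ℚ_[p] := 1 - g with hh
  -- coefficient facts about h
  have h1 : ∀ n, ‖PowerSeries.coeff (R := ℚ_[p]) n h‖ ≤ 1 := by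
    intro n
    rw [hh, map_sub]
    rcases Nat.eq_zero_or_pos n with rfl | hn
    · rw [PowerSeries.coeff_one, if_pos rfl]
      calc ‖1 - PowerSeries.coeff (R := ℚ_[p]) 0 g‖ = ‖PowerSeries.coeff (R := ℚ_[p]) 0 g - 1‖ :=
            norm_sub_rev _ _
        _ ≤ (p:ℝ)⁻¹ := hg0
        _ ≤ 1 := le_of_lt hr1
    · rw [PowerSeries.coeff_one, if_neg (Nat.pos_iff_ne_zero.1 hn), zero_sub, norm_neg]
      exact hg n
  have h0 : ‖PowerSeries.coeff (R := ℚ_[p]) 0 h‖ ≤ (p:ℝ)⁻¹ := by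
    rw [hh, map_sub, PowerSeries.coeff_one, if_pos rfl]
    calc ‖1 - PowerSeries.coeff (R := ℚ_[p]) 0 g‖ = ‖PowerSeries.coeff (R := ℚ_[p]) 0 g - 1‖ :=
          norm_sub_rev _ _
      _ ≤ (p:ℝ)⁻¹ := hg0
  have hpowB := aux_pow_bound p h h1 h0
  have hpowI := aux_pow_int p h h1
  -- derivative of h
  set hd : PowerSeries ℚ_[p] := PowerSeries.derivativeFun h with hdh
  have hdI : ∀ n, ‖PowerSeries.coeff (R := ℚ_[p]) n hd‖ ≤ 1 := by
    intro n
    rw [hdh, aux_coeff_dF, norm_mul]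
    have : ((n : ℚ_[p]) + 1) = ((n+1 : ℕ) : ℚ_[p]) := by push_cast; ring
    rw [this]
    exact mul_le_one₀ (h1 (n+1)) (norm_nonneg _) (aux_nat_norm_le_one p (n+1))
  have hmulI : ∀ m n, ‖PowerSeries.coeff (R := ℚ_[p]) n (h ^ m * hd)‖ ≤ 1 := fun m n =>
    aux_coeff_mul_int p _ _ (hpowI m) hdI n
  -- norm of the terms of the log series
  have hnorma : ∀ k m : ℕ,
      ‖-(PowerSeries.coeff (R := ℚ_[p]) k (h ^ (m + 1)) / ((m : ℚ_[p]) + 1))‖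
        ≤ ((p:ℝ)⁻¹) ^ (m + 1 - k) * ((m:ℝ) + 1) := by
    intro k m
    rw [norm_neg, div_eq_mul_inv, norm_mul]
    refine mul_le_mul (hpowB (m+1) k) ?_ (norm_nonneg _) (by positivity)
    have := aux_norm_inv_nat p (m+1) (Nat.succ_ne_zero m)
    push_cast at this
    exact this
  -- summability of the log series coefficientwise
  have hm1 : ∀ m : ℕ, ((m:ℝ) + 1) ≤ (p:ℝ) ^ m := by
    intro m
    calc ((m:ℝ) + 1) ≤ (2:ℝ) ^ m := by
          exact_mod_cast Nat.succ_le_of_lt (Nat.lt_two_pow_self (n := m))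
      _ ≤ (p:ℝ) ^ m := by
          exact pow_le_pow_left₀ (by norm_num) (by exact_mod_cast hp.two_le) m
  have hsummable : ∀ k : ℕ,
      Summable (fun m : ℕ => -(PowerSeries.coeff (R := ℚ_[p]) k (h ^ (m + 1)) / ((m : ℚ_[p]) + 1))) := by
    intro k
    refine Summable.of_norm_bounded
      (g := fun m : ℕ => (p:ℝ) ^ k * (((m:ℝ) + 1) * ((p:ℝ)⁻¹) ^ m))
      (Summable.mul_left _ (aux_geo_summable ((p:ℝ)⁻¹) hr0 hr1)) fun m => ?_
    calc ‖-(PowerSeries.coeff (R := ℚ_[p]) k (h ^ (m + 1)) / ((m : ℚ_[p]) + 1))‖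
        ≤ ((p:ℝ)⁻¹) ^ (m + 1 - k) * ((m:ℝ) + 1) := hnorma k m
      _ ≤ ((p:ℝ) ^ k * ((p:ℝ)⁻¹) ^ (m+1)) * ((m:ℝ) + 1) := by
          exact mul_le_mul_of_nonneg_right (aux_keypow p (m+1) k) (by positivity)
      _ ≤ ((p:ℝ) ^ k * ((p:ℝ)⁻¹) ^ m) * ((m:ℝ) + 1) := by
          have h2 : ((p:ℝ)⁻¹) ^ (m+1) ≤ ((p:ℝ)⁻¹) ^ m :=
            pow_le_pow_of_le_one hr0 (le_of_lt hr1) (Nat.le_succ m)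
          exact mul_le_mul_of_nonneg_right
            (mul_le_mul_of_nonneg_left h2 (by positivity)) (by positivity)
      _ = (p:ℝ) ^ k * (((m:ℝ) + 1) * ((p:ℝ)⁻¹) ^ m) := by ring
  -- the log series
  set L : PowerSeries ℚ_[p] := PowerSeries.mk
    (fun k => ∑' m : ℕ, -(PowerSeries.coeff (R := ℚ_[p]) k (h ^ (m + 1)) / ((m : ℚ_[p]) + 1)))
    with hL
  have hLsum : ∀ k : ℕ,
      HasSum (fun m : ℕ => -(PowerSeries.coeff (R := ℚ_[p]) k (h ^ (m + 1)) / ((m : ℚ_[p]) + 1)))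
        (PowerSeries.coeff (R := ℚ_[p]) k L) := by
    intro k
    rw [hL, PowerSeries.coeff_mk]
    exact (hsummable k).hasSum
  -- key algebraic identity for terms
  have hmain : ∀ k m : ℕ,
      -(PowerSeries.coeff (R := ℚ_[p]) (k+1) (h ^ (m + 1)) / ((m : ℚ_[p]) + 1)) * ((k : ℚ_[p]) + 1)
        = -(PowerSeries.coeff (R := ℚ_[p]) k (h ^ m * hd)) := by
    intro k m
    have hmne : ((m : ℚ_[p]) + 1) ≠ 0 := by
      have : ((m : ℚ_[p]) + 1) = ((m+1 : ℕ) : ℚ_[p]) := by push_cast; ring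
      rw [this]
      exact Nat.cast_ne_zero.2 (Nat.succ_ne_zero m)
    have e1 : PowerSeries.coeff (R := ℚ_[p]) (k+1) (h ^ (m+1)) * ((k : ℚ_[p]) + 1)
        = ((m : ℚ_[p]) + 1) * PowerSeries.coeff (R := ℚ_[p]) k (h ^ m * hd) := by
      have := congrArg (PowerSeries.coeff (R := ℚ_[p]) k) (aux_dpow p h m)
      rwa [aux_coeff_dF, PowerSeries.coeff_C_mul] at this
    rw [neg_mul, div_mul_eq_mul_div, e1, mul_div_cancel_left₀ _ hmne]
  -- integrality of (k+1) * coeff (k+1) L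
  have hder1 : ∀ k : ℕ, ‖PowerSeries.coeff (R := ℚ_[p]) (k+1) L * ((k : ℚ_[p]) + 1)‖ ≤ 1 := by
    intro k
    have Hs := (hLsum (k+1)).mul_right ((k : ℚ_[p]) + 1)
    have Hs' : HasSum (fun m : ℕ => -(PowerSeries.coeff (R := ℚ_[p]) k (h ^ m * hd)))
        (PowerSeries.coeff (R := ℚ_[p]) (k+1) L * ((k : ℚ_[p]) + 1)) := by
      simpa only [hmain] using Hs
    rw [← Hs'.tsum_eq]
    exact IsUltrametricDist.norm_tsum_le_of_forall_le fun m => by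
      rw [norm_neg]; exact hmulI m k
  -- geometric bound on coeff k (h^m * hd)
  have hbgeo : ∀ k m : ℕ,
      ‖PowerSeries.coeff (R := ℚ_[p]) k (h ^ m * hd)‖ ≤ (p:ℝ) ^ k * ((p:ℝ)⁻¹) ^ m := by
    intro k m
    rw [PowerSeries.coeff_mul]
    refine IsUltrametricDist.norm_sum_le_of_forall_le_of_nonneg (by positivity) fun x hx => ?_
    rw [Finset.HasAntidiagonal.mem_antidiagonal] at hx
    rw [norm_mul]
    calc ‖PowerSeries.coeff (R := ℚ_[p]) x.1 (h^m)‖ * ‖PowerSeries.coeff (R := ℚ_[p]) x.2 hd‖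
        ≤ ((p:ℝ)⁻¹) ^ (m - x.1) * 1 :=
          mul_le_mul (hpowB m x.1) (hdI x.2) (norm_nonneg _) (by positivity)
      _ = ((p:ℝ)⁻¹) ^ (m - x.1) := mul_one _
      _ ≤ (p:ℝ) ^ x.1 * ((p:ℝ)⁻¹) ^ m := aux_keypow p m x.1
      _ ≤ (p:ℝ) ^ k * ((p:ℝ)⁻¹) ^ m := by
          exact mul_le_mul_of_nonneg_right (pow_le_pow_right₀ hp1 (by omega)) (by positivity)
  have htend0 : ∀ k : ℕ, Tendsto (fun m : ℕ => PowerSeries.coeff (R := ℚ_[p]) k (h ^ m * hd))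
      atTop (nhds 0) := by
    intro k
    refine squeeze_zero_norm (hbgeo k) ?_
    have := (tendsto_pow_atTop_nhds_zero_of_lt_one hr0 hr1).const_mul ((p:ℝ) ^ k)
    simpa using this
  -- telescoping sum
  have hcsum : ∀ k : ℕ,
      HasSum (fun m : ℕ => PowerSeries.coeff (R := ℚ_[p]) k (h ^ (m+1) * hd)
          - PowerSeries.coeff (R := ℚ_[p]) k (h ^ m * hd))
        (PowerSeries.coeff (R := ℚ_[p]) k (PowerSeries.derivativeFun g)) := by
    intro k
    have S : Summable (fun m : ℕ => PowerSeries.coeff (R := ℚ_[p]) k (h ^ (m+1) * hd)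
        - PowerSeries.coeff (R := ℚ_[p]) k (h ^ m * hd)) := by
      refine Summable.of_norm_bounded (g := fun m : ℕ => 2 * ((p:ℝ) ^ k * ((p:ℝ)⁻¹) ^ m))
        (Summable.mul_left _ ((summable_geometric_of_lt_one hr0 hr1).mul_left _)) fun m => ?_
      calc ‖PowerSeries.coeff (R := ℚ_[p]) k (h ^ (m+1) * hd) - PowerSeries.coeff (R := ℚ_[p]) k (h ^ m * hd)‖
          ≤ ‖PowerSeries.coeff (R := ℚ_[p]) k (h ^ (m+1) * hd)‖
            + ‖PowerSeries.coeff (R := ℚ_[p]) k (h ^ m * hd)‖ := norm_sub_le _ _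
        _ ≤ (p:ℝ) ^ k * ((p:ℝ)⁻¹) ^ m + (p:ℝ) ^ k * ((p:ℝ)⁻¹) ^ m := by
            refine add_le_add (le_trans (hbgeo k (m+1)) ?_) (hbgeo k m)
            exact mul_le_mul_of_nonneg_left
              (pow_le_pow_of_le_one hr0 (le_of_lt hr1) (Nat.le_succ m)) (by positivity)
        _ = 2 * ((p:ℝ) ^ k * ((p:ℝ)⁻¹) ^ m) := by ring
    have T1 := S.hasSum.tendsto_sum_nat
    have T2 : ∀ N : ℕ, ∑ m ∈ Finset.range N,
        (PowerSeries.coeff (R := ℚ_[p]) k (h ^ (m+1) * hd) - PowerSeries.coeff (R := ℚ_[p]) k (h ^ m * hd))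
        = PowerSeries.coeff (R := ℚ_[p]) k (h ^ N * hd) - PowerSeries.coeff (R := ℚ_[p]) k (h ^ 0 * hd) :=
      fun N => Finset.sum_range_sub (fun m => PowerSeries.coeff (R := ℚ_[p]) k (h ^ m * hd)) N
    have T1' : Tendsto (fun N : ℕ => PowerSeries.coeff (R := ℚ_[p]) k (h ^ N * hd)
        - PowerSeries.coeff (R := ℚ_[p]) k (h ^ 0 * hd)) atTop
        (nhds (∑' m : ℕ, (PowerSeries.coeff (R := ℚ_[p]) k (h ^ (m+1) * hd)
          - PowerSeries.coeff (R := ℚ_[p]) k (h ^ m * hd)))) := by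
      simpa only [T2] using T1
    have T3 : Tendsto (fun N : ℕ => PowerSeries.coeff (R := ℚ_[p]) k (h ^ N * hd)
        - PowerSeries.coeff (R := ℚ_[p]) k (h ^ 0 * hd)) atTop
        (nhds (0 - PowerSeries.coeff (R := ℚ_[p]) k (h ^ 0 * hd))) :=
      (htend0 k).sub_const _
    have hts : (∑' m : ℕ, (PowerSeries.coeff (R := ℚ_[p]) k (h ^ (m+1) * hd)
        - PowerSeries.coeff (R := ℚ_[p]) k (h ^ m * hd)))
        = PowerSeries.coeff (R := ℚ_[p]) k (PowerSeries.derivativeFun g) := by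
      rw [tendsto_nhds_unique T1' T3]
      rw [pow_zero, one_mul, hdh, hh]
      have : PowerSeries.derivativeFun (1 - g)
          = PowerSeries.derivativeFun 1 - PowerSeries.derivativeFun g := by
        ext n
        simp [aux_coeff_dF, map_sub, sub_mul]
      rw [this, PowerSeries.derivativeFun_one]
      simp
    exact hts ▸ S.hasSum
  -- derivative identity
  have hderiv : g * PowerSeries.derivativeFun L = PowerSeries.derivativeFun g := by
    have hgeq : g = 1 - h := by rw [hh]; ring
    ext k
    have Hsum := hasSum_sum (s := Finset.HasAntidiagonal.antidiagonal k)
      (f := fun x (m : ℕ) => PowerSeries.coeff (R := ℚ_[p]) x.1 g *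
        (-(PowerSeries.coeff (R := ℚ_[p]) (x.2+1) (h ^ (m + 1)) / ((m : ℚ_[p]) + 1)) * ((x.2 : ℚ_[p]) + 1)))
      (a := fun x => PowerSeries.coeff (R := ℚ_[p]) x.1 g *
        (PowerSeries.coeff (R := ℚ_[p]) (x.2+1) L * ((x.2 : ℚ_[p]) + 1)))
      (fun x _ => ((hLsum (x.2+1)).mul_right ((x.2 : ℚ_[p]) + 1)).mul_left _)
    have Hfun : (fun m : ℕ => ∑ x ∈ Finset.HasAntidiagonal.antidiagonal k, PowerSeries.coeff (R := ℚ_[p]) x.1 g *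
        (-(PowerSeries.coeff (R := ℚ_[p]) (x.2+1) (h ^ (m + 1)) / ((m : ℚ_[p]) + 1)) * ((x.2 : ℚ_[p]) + 1)))
        = fun m : ℕ => PowerSeries.coeff (R := ℚ_[p]) k (h ^ (m+1) * hd)
          - PowerSeries.coeff (R := ℚ_[p]) k (h ^ m * hd) := by
      funext m
      have step1 : ∀ x ∈ Finset.HasAntidiagonal.antidiagonal k, PowerSeries.coeff (R := ℚ_[p]) x.1 g *
          (-(PowerSeries.coeff (R := ℚ_[p]) (x.2+1) (h ^ (m + 1)) / ((m : ℚ_[p]) + 1)) * ((x.2 : ℚ_[p]) + 1))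
          = -(PowerSeries.coeff (R := ℚ_[p]) x.1 g * PowerSeries.coeff (R := ℚ_[p]) x.2 (h ^ m * hd)) := by
        intro x _
        rw [hmain x.2 m, mul_neg]
      rw [Finset.sum_congr rfl step1]
      have gsplit : g * (h ^ m * hd) = h ^ m * hd - h ^ (m+1) * hd := by
        rw [hgeq]; ring
      calc ∑ x ∈ Finset.HasAntidiagonal.antidiagonal k,
            -(PowerSeries.coeff (R := ℚ_[p]) x.1 g * PowerSeries.coeff (R := ℚ_[p]) x.2 (h ^ m * hd))
          = -∑ x ∈ Finset.HasAntidiagonal.antidiagonal k,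
            PowerSeries.coeff (R := ℚ_[p]) x.1 g * PowerSeries.coeff (R := ℚ_[p]) x.2 (h ^ m * hd) := by
            rw [Finset.sum_neg_distrib]
        _ = -(PowerSeries.coeff (R := ℚ_[p]) k (g * (h ^ m * hd))) := by rw [PowerSeries.coeff_mul]
        _ = PowerSeries.coeff (R := ℚ_[p]) k (h ^ (m+1) * hd)
            - PowerSeries.coeff (R := ℚ_[p]) k (h ^ m * hd) := by
            rw [gsplit, map_sub]; ring
    rw [Hfun] at Hsum
    have hkey := Hsum.unique (hcsum k)
    rw [PowerSeries.coeff_mul]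
    rw [← hkey]
    refine Finset.sum_congr rfl fun x _ => ?_
    rw [aux_coeff_dF]
  -- constant coefficient bound
  have hL0 : ‖PowerSeries.coeff (R := ℚ_[p]) 0 L‖ ≤ (p:ℝ)⁻¹ := by
    rw [← (hLsum 0).tsum_eq]
    refine IsUltrametricDist.norm_tsum_le_of_forall_le fun m => ?_
    calc ‖-(PowerSeries.coeff (R := ℚ_[p]) 0 (h ^ (m + 1)) / ((m : ℚ_[p]) + 1))‖
        ≤ ((p:ℝ)⁻¹) ^ (m + 1 - 0) * ((m:ℝ) + 1) := hnorma 0 m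
      _ = ((p:ℝ)⁻¹) ^ (m + 1) * ((m:ℝ) + 1) := by rw [Nat.sub_zero]
      _ ≤ ((p:ℝ)⁻¹) ^ (m + 1) * (p:ℝ) ^ m := by
          exact mul_le_mul_of_nonneg_left (hm1 m) (by positivity)
      _ = (p:ℝ)⁻¹ * (((p:ℝ)⁻¹) ^ m * (p:ℝ) ^ m) := by rw [pow_succ]; ring
      _ = (p:ℝ)⁻¹ := by
          rw [← mul_pow, inv_mul_cancel₀ (ne_of_gt hp0), one_pow, mul_one]
  -- coefficient bound for MemAt part 2
  have hLb : ∀ n : ℕ, ‖PowerSeries.coeff (R := ℚ_[p]) n L‖ ≤ (n:ℝ) + 1 := by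
    intro n
    rcases Nat.eq_zero_or_pos n with rfl | hn
    · calc ‖PowerSeries.coeff (R := ℚ_[p]) 0 L‖ ≤ (p:ℝ)⁻¹ := hL0
        _ ≤ 1 := le_of_lt hr1
        _ ≤ ((0:ℕ):ℝ) + 1 := by norm_num
    · obtain ⟨k, rfl⟩ := Nat.exists_eq_succ_of_ne_zero (Nat.pos_iff_ne_zero.1 hn)
      have hne : ((k+1 : ℕ) : ℚ_[p]) ≠ 0 :=
        Nat.cast_ne_zero.2 (Nat.succ_ne_zero k)
      have hne' : ((k : ℚ_[p]) + 1) ≠ 0 := by push_cast at hne; exact hne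
      have heq : PowerSeries.coeff (R := ℚ_[p]) (k+1) L
          = ((k+1 : ℕ) : ℚ_[p])⁻¹ * (PowerSeries.coeff (R := ℚ_[p]) (k+1) L * ((k : ℚ_[p]) + 1)) := by
        push_cast
        field_simp
      rw [heq, norm_mul]
      calc ‖((k+1 : ℕ) : ℚ_[p])⁻¹‖ * ‖PowerSeries.coeff (R := ℚ_[p]) (k+1) L * ((k : ℚ_[p]) + 1)‖
          ≤ ((k+1 : ℕ) : ℝ) * 1 := by
            exact mul_le_mul (aux_norm_inv_nat p (k+1) (Nat.succ_ne_zero k)) (hder1 k)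
              (norm_nonneg _) (by positivity)
        _ ≤ ((k+1 : ℕ) : ℝ) + 1 := by push_cast; linarith
  refine ⟨L, hLsum, ⟨?_, ?_⟩, hderiv, hL0⟩
  · -- divided power bounds
    intro n
    rcases Nat.eq_zero_or_pos n with rfl | hn
    · simp only [Nat.factorial_zero, Nat.cast_one, one_mul]
      exact le_trans hL0 (le_of_lt hr1)
    · obtain ⟨k, rfl⟩ := Nat.exists_eq_succ_of_ne_zero (Nat.pos_iff_ne_zero.1 hn)
      have hfact : (((k+1)! : ℕ) : ℚ_[p]) = ((k ! : ℕ) : ℚ_[p]) * ((k : ℚ_[p]) + 1) := by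
        rw [Nat.factorial_succ]
        push_cast
        ring
      rw [hfact, mul_assoc, norm_mul]
      calc ‖((k ! : ℕ) : ℚ_[p])‖ * ‖((k : ℚ_[p]) + 1) * PowerSeries.coeff (R := ℚ_[p]) (k+1) L‖
          ≤ 1 * 1 := by
            refine mul_le_mul (aux_nat_norm_le_one p _) ?_ (norm_nonneg _) zero_le_one
            rw [mul_comm]
            exact hder1 k
        _ = 1 := one_mul 1
  · -- decay
    intro r hrpos hrlt
    have hsum := aux_geo_summable r (le_of_lt hrpos) hrlt
    refine squeeze_zero (fun n => by positivity) (fun n => ?_) hsum.tendsto_atTop_zero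
    exact mul_le_mul_of_nonneg_right (hLb n) (pow_nonneg (le_of_lt hrpos) n)
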